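/- Let λ be an eigenvalue of the pencil λ²M + λC + K with eigenvector x, μ ≠ λ, and let y satisfy (μ²M + μ C_k + K_k)y = b_k, where C_k = C − Σ_{i<k} bᵢfᵢᵀ e^{−μτ} and K_k = K − Σ_{i<k} bᵢgᵢᵀ e^{−μτ}. Then xᵀ(μM + λM + C)y = (xᵀb_k)/(μ − λ) + e^{−μτ} · xᵀ(Σ_{i<k} bᵢ(μ fᵢᵀ + gᵢᵀ)) y / (μ − λ). -/
import Mathlib


open Matrix

/-- Complexification of a real matrix. -/
def mc {n m : ℕ} (A : Matrix (Fin n) (Fin m) ℝ) : Matrix (Fin n) (Fin m) ℂ :=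
  A.map Complex.ofReal

/-- Complexification of a real vector. -/
def vc {n : ℕ} (v : Fin n → ℝ) : Fin n → ℂ := fun i => (v i : ℂ)

lemma mc_symm {n : ℕ} {A : Matrix (Fin n) (Fin n) ℝ} (h : A.IsSymm) : (mc A).IsSymm := by
  unfold mc
  rw [Matrix.IsSymm, ← Matrix.transpose_map, h.eq]

lemma symm_dot {n : ℕ} {A : Matrix (Fin n) (Fin n) ℂ} (h : A.IsSymm)
    (x y : Fin n → ℂ) : x ⬝ᵥ (A *ᵥ y) = (A *ᵥ x) ⬝ᵥ y := by
  rw [Matrix.dotProduct_mulVec, ← Matrix.mulVec_transpose, h.eq]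

theorem stmt_12 (n q : ℕ) (M C K : Matrix (Fin n) (Fin n) ℝ)
    (hM : M.IsSymm) (hC : C.IsSymm) (hK : K.IsSymm)
    (b f g : Fin q → Fin n → ℝ) (bk : Fin n → ℝ) (τ : ℝ) (hτ : 0 < τ)
    (lam mu : ℂ) (hne : mu ≠ lam)
    (x y : Fin n → ℂ)
    (hx : (lam ^ 2 • mc M + lam • mc C + mc K) *ᵥ x = 0)
    (Ck Kk : Matrix (Fin n) (Fin n) ℂ)
    (hCk : Ck = mc C - Complex.exp (-mu * τ) • ∑ i, vecMulVec (vc (b i)) (vc (f i)))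
    (hKk : Kk = mc K - Complex.exp (-mu * τ) • ∑ i, vecMulVec (vc (b i)) (vc (g i)))
    (hy : (mu ^ 2 • mc M + mu • Ck + Kk) *ᵥ y = vc bk) :
    x ⬝ᵥ (((mu + lam) • mc M + mc C) *ᵥ y) =
      (vc bk ⬝ᵥ x) / (mu - lam) +
        Complex.exp (-mu * τ) *
          (x ⬝ᵥ ((∑ i, vecMulVec (vc (b i)) (mu • vc (f i) + vc (g i))) *ᵥ y)) / (mu - lam) := by
  set e := Complex.exp (-mu * τ) with he
  set Sf := ∑ i, vecMulVec (vc (b i)) (vc (f i)) with hSf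
  set Sg := ∑ i, vecMulVec (vc (b i)) (vc (g i)) with hSg
  have hsub : mu - lam ≠ 0 := sub_ne_zero.mpr hne
  have hA : (lam ^ 2 • mc M + lam • mc C + mc K).IsSymm := by
    rw [Matrix.IsSymm]
    simp [Matrix.transpose_add, Matrix.transpose_smul, (mc_symm hM).eq, (mc_symm hC).eq,
      (mc_symm hK).eq]
  have h0 : x ⬝ᵥ ((lam ^ 2 • mc M + lam • mc C + mc K) *ᵥ y) = 0 := by
    rw [symm_dot hA, hx, zero_dotProduct]
  have hsum : (∑ i, vecMulVec (vc (b i)) (mu • vc (f i) + vc (g i))) = mu • Sf + Sg := by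
    rw [hSf, hSg, Finset.smul_sum, ← Finset.sum_add_distrib]
    refine Finset.sum_congr rfl fun i _ => ?_
    ext r s
    simp [Matrix.vecMulVec_apply, Pi.smul_apply, smul_eq_mul]
    ring
  have h1 : x ⬝ᵥ ((mu ^ 2 • mc M + mu • Ck + Kk) *ᵥ y) = vc bk ⬝ᵥ x := by
    rw [hy, dotProduct_comm]
  rw [hCk, hKk] at h1
  have expand : ∀ (A B D : Matrix (Fin n) (Fin n) ℂ),
      x ⬝ᵥ ((A + B + D) *ᵥ y) = x ⬝ᵥ (A *ᵥ y) + x ⬝ᵥ (B *ᵥ y) + x ⬝ᵥ (D *ᵥ y) := by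
    intro A B D
    simp [Matrix.add_mulVec, dotProduct_add]
  rw [expand] at h0 h1
  simp only [Matrix.smul_mulVec, dotProduct_smul, Matrix.sub_mulVec, dotProduct_sub,
    smul_eq_mul] at h0 h1
  rw [hsum]
  simp only [Matrix.add_mulVec, Matrix.smul_mulVec, dotProduct_add, dotProduct_smul,
    smul_eq_mul]
  field_simp
  linear_combination h1 - h0
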